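/- If η : ℤ → ℝ satisfies η(3m) = η(m) for all m, η(1) = 0, η(2) = −(1/3)η(0), and η(n) → 0 as n → ∞, then η(0) = 0. -/

import Mathlib

open Filter

/-- case `k+ℓ = 3`: if `η : ℤ → ℝ` satisfies `η(3m) = η(m)`
for all `m`, `η(1) = 0`, `η(2) = -(1/3) η(0)`, and `η(n) → 0` as `n → ∞`,
then `η(0) = 0`. -/
theorem gtm_ac_part_vanishes_case_three (η : ℤ → ℝ)
    (hself : ∀ m : ℤ, η (3 * m) = η m)
    (hone : η 1 = 0) (htwo : η 2 = -(1 / 3) * η 0)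
    (hdecay : Tendsto (fun n : ℕ => η (n : ℤ)) atTop (nhds 0)) :
    η 0 = 0 := by
  have key : ∀ k : ℕ, η ((2 * 3 ^ k : ℕ) : ℤ) = η 2 := by
    intro k
    induction k with
    | zero => norm_num
    | succ n ih =>
      have : ((2 * 3 ^ (n + 1) : ℕ) : ℤ) = 3 * ((2 * 3 ^ n : ℕ) : ℤ) := by
        push_cast; ring
      rw [this, hself, ih]
  have hmono : Tendsto (fun k : ℕ => 2 * 3 ^ k) atTop atTop := by
    exact (tendsto_pow_atTop_atTop_of_one_lt (r := 3) (by norm_num)).const_mul_atTop' (by norm_num)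
  have h2 : Tendsto (fun k : ℕ => η ((2 * 3 ^ k : ℕ) : ℤ)) atTop (nhds 0) :=
    hdecay.comp hmono
  simp only [key] at h2
  have : η 2 = 0 := tendsto_nhds_unique tendsto_const_nhds h2
  rw [htwo] at this
  linarith
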